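/- Let S_c(P(M_T), B(A_T)) be the canonical assignment restricted to users of mediators in M_T and slots of advertisers in A_T. Then min{|P_o ∩ P(M_T)|, |B_o ∩ B(A_T)|} ≤ |S_c(P(M_T), B(A_T))| ≤ max{|P_o ∩ P(M_T)|, |B_o ∩ B(A_T)|}. -/

import Mathlib

section Aux

variable {α : Type*}

/-- `countP` as a count of indices in `Finset.range`. -/
lemma countP_eq_card_filter_range (q : α → Bool) (d : α) (l : List α) :
    l.countP q = ((Finset.range l.length).filter (fun i => q (l.getD i d) = true)).card := by
  induction l with
  | nil => simp
  | cons a l ih =>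
    rw [Finset.card_filter, List.length_cons, Finset.sum_range_succ']
    simp only [List.getD_cons_succ, List.getD_cons_zero, ← Finset.card_filter]
    rw [List.countP_cons, ← ih]


/-- strict monotonicity of access in a strictly sorted list -/
lemma sorted_get_lt {l : List ℕ} (hl : l.Pairwise (· < ·)) {i j : ℕ}
    (hij : i < j) (hj : j < l.length) : l[i]'(hij.trans hj) < l[j] := by
  have := List.pairwise_iff_get.mp hl ⟨i, hij.trans hj⟩ ⟨j, hj⟩ hij
  simpa using this

lemma sorted_get_le {l : List ℕ} (hl : l.Pairwise (· < ·)) {i j : ℕ}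
    (hij : i ≤ j) (hj : j < l.length) : l[i]'(lt_of_le_of_lt hij hj) ≤ l[j] := by
  rcases hij.lt_or_eq with h | h
  · exact (sorted_get_lt hl h hj).le
  · subst h; rfl

/-- Key characterization: in a strictly increasing list, the `j`-th entry is `< s`
iff `j` is below the number of entries `< s`. -/
lemma get_lt_iff_lt_countP {l : List ℕ} (hl : l.Pairwise (· < ·)) (s : ℕ) {j : ℕ}
    (hj : j < l.length) :
    l[j] < s ↔ j < l.countP (fun x => decide (x < s)) := by
  rw [countP_eq_card_filter_range _ 0]
  constructor
  · intro h
    have hsub : Finset.range (j + 1) ⊆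
        (Finset.range l.length).filter (fun i => decide (l.getD i 0 < s) = true) := by
      intro i hi
      rw [Finset.mem_range] at hi
      have hi' : i < l.length := lt_of_lt_of_le hi hj
      rw [Finset.mem_filter, Finset.mem_range]
      refine ⟨hi', ?_⟩
      rw [List.getD_eq_getElem _ _ hi', decide_eq_true_iff]
      exact lt_of_le_of_lt (sorted_get_le hl (Nat.lt_succ_iff.mp hi) hj) h
    have := Finset.card_le_card hsub
    simpa using this
  · intro h
    by_contra hge
    push_neg at hge
    have hsub : (Finset.range l.length).filter (fun i => decide (l.getD i 0 < s) = true) ⊆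
        Finset.range j := by
      intro i hi
      rw [Finset.mem_filter, Finset.mem_range] at hi
      obtain ⟨hi', hq⟩ := hi
      rw [List.getD_eq_getElem _ _ hi', decide_eq_true_iff] at hq
      rw [Finset.mem_range]
      by_contra hij
      push_neg at hij
      exact absurd (lt_of_le_of_lt (le_trans hge (sorted_get_le hl hij hi')) hq)
        (lt_irrefl s)
    have := Finset.card_le_card hsub
    simp only [Finset.card_range] at this
    omega

/-- A downward-closed finset of naturals is a range. -/
lemma downward_closed_eq_range {D : Finset ℕ}
    (h : ∀ i j : ℕ, i ∈ D → j < i → j ∈ D) : D = Finset.range D.card := by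
  refine (Finset.eq_of_subset_of_card_le ?_ (by simp)).symm
  intro k hk
  rw [Finset.mem_range] at hk
  by_contra hkD
  have hsub : D ⊆ Finset.range k := by
    intro i hi
    rw [Finset.mem_range]
    rcases lt_trichotomy i k with h' | h' | h'
    · exact h'
    · exact absurd (h' ▸ hi) hkD
    · exact absurd (h i k hi h') hkD
  have := Finset.card_le_card hsub
  simp only [Finset.card_range] at this
  omega

/-- `countP` on the sorted list of a finset counts filtered elements. -/
lemma countP_sort_eq_card_filter (S : Finset ℕ) (s : ℕ) :
    (S.sort (· ≤ ·)).countP (fun x => decide (x < s)) = (S.filter (fun x => x < s)).card := by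
  set l := S.sort (· ≤ ·) with hl
  have hnd : l.Nodup := S.sort_nodup _
  rw [List.countP_eq_length_filter]
  have hnd' : (l.filter (fun x => decide (x < s))).Nodup := hnd.filter _
  rw [← List.toFinset_card_of_nodup hnd']
  congr 1
  ext x
  simp [List.mem_filter, hl, Finset.mem_sort]

end Aux

/-- Size of the canonical assignment restricted to users `PT` and slots `BT`:
sort the user indices of `PT` increasingly (by `StrictMono c` this is the
increasing-cost order) and the slot indices of `BT` increasingly (by
`StrictAnti v` this is the decreasing-value order), match them location by
location, and count the locations where the value exceeds the cost. -/
noncomputable def canonSize (c v : ℕ → ℝ) (PT BT : Finset ℕ) : ℕ :=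
  (List.zip ((PT.sort (· ≤ ·)).map c) ((BT.sort (· ≤ ·)).map v)).countP
    (fun x => decide (x.1 < x.2))

lemma canonSize_eq (c v : ℕ → ℝ) (PT BT : Finset ℕ) :
    canonSize c v PT BT =
      ((Finset.range (min (PT.sort (· ≤ ·)).length (BT.sort (· ≤ ·)).length)).filter
        (fun j => c ((PT.sort (· ≤ ·)).getD j 0) < v ((BT.sort (· ≤ ·)).getD j 0))).card := by
  classical
  set lp := PT.sort (· ≤ ·)
  set lb := BT.sort (· ≤ ·)
  rw [canonSize, List.zip_map, List.countP_map,
    countP_eq_card_filter_range _ (0, 0)]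
  rw [List.length_zip]
  congr 1
  apply Finset.filter_congr
  intro j hj
  rw [Finset.mem_range] at hj
  have hj' : j < (lp.zip lb).length := by rwa [List.length_zip]
  rw [List.getD_eq_getElem _ _ hj', List.getElem_zip]
  have h1 : j < lp.length := lt_of_lt_of_le hj (min_le_left _ _)
  have h2 : j < lb.length := lt_of_lt_of_le hj (min_le_right _ _)
  rw [List.getD_eq_getElem _ _ h1, List.getD_eq_getElem _ _ h2]
  simp [Function.comp, Prod.map]

/-- `min {|P_o ∩ P(M_T)|, |B_o ∩ B(A_T)|} ≤ |S_c(P(M_T),B(A_T))|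
≤ max {|P_o ∩ P(M_T)|, |B_o ∩ B(A_T)|}`, where `PT` (resp. `BT`) is the index
set of users of mediators in `M_T` (resp. slots of advertisers in `A_T`), and
`Po` is the set of matched locations of the full canonical assignment. -/
theorem stmt_4 (n m : ℕ) (c v : ℕ → ℝ)
    (hc : StrictMono c) (hv : StrictAnti v)
    (hcv : ∀ i j : ℕ, c i ≠ v j)
    (PT BT : Finset ℕ) (hPT : PT ⊆ Finset.range n) (hBT : BT ⊆ Finset.range m)
    (Po : Finset ℕ)
    (hPo : Po = (Finset.range (min n m)).filter (fun i => c i < v i)) :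
    min ((Po ∩ PT).card) ((Po ∩ BT).card) ≤ canonSize c v PT BT ∧
      canonSize c v PT BT ≤ max ((Po ∩ PT).card) ((Po ∩ BT).card) := by
  classical
  set lp := PT.sort (· ≤ ·) with hlp
  set lb := BT.sort (· ≤ ·) with hlb
  have hlps : lp.Pairwise (· < ·) := PT.sortedLT_sort.pairwise
  have hlbs : lb.Pairwise (· < ·) := BT.sortedLT_sort.pairwise
  set s := Po.card with hs
  -- Po is downward closed, hence a range
  have hPoR : Po = Finset.range s := by
    apply downward_closed_eq_range
    intro i j hi hij
    rw [hPo, Finset.mem_filter, Finset.mem_range] at hi ⊢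
    exact ⟨hij.trans hi.1, lt_trans (lt_trans (hc hij) hi.2) (hv hij)⟩
  have hPomem : ∀ i : ℕ, i ∈ Po ↔ i < s := by
    intro i; rw [hPoR, Finset.mem_range]
  -- counts
  have hsP : (Po ∩ PT).card = lp.countP (fun x => decide (x < s)) := by
    rw [countP_sort_eq_card_filter]
    congr 1
    ext x
    simp only [Finset.mem_inter, Finset.mem_filter, hPomem, and_comm]
  have hsB : (Po ∩ BT).card = lb.countP (fun x => decide (x < s)) := by
    rw [countP_sort_eq_card_filter]
    congr 1
    ext x
    simp only [Finset.mem_inter, Finset.mem_filter, hPomem, and_comm]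
  set sP := (Po ∩ PT).card with hsPdef
  set sB := (Po ∩ BT).card with hsBdef
  -- characterization of sorted access
  have hcharP : ∀ j (hj : j < lp.length), (lp[j] < s ↔ j < sP) := by
    intro j hj; rw [hsP]; exact get_lt_iff_lt_countP hlps s hj
  have hcharB : ∀ j (hj : j < lb.length), (lb[j] < s ↔ j < sB) := by
    intro j hj; rw [hsB]; exact get_lt_iff_lt_countP hlbs s hj
  have hsPle : sP ≤ lp.length := by
    rw [hsP]; exact List.countP_le_length
  have hsBle : sB ≤ lb.length := by
    rw [hsB]; exact List.countP_le_length
  have hmemP : ∀ j (hj : j < lp.length), lp[j] < n := by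
    intro j hj
    have : lp[j] ∈ PT := (Finset.mem_sort _).mp (List.getElem_mem hj)
    have := hPT this
    rwa [Finset.mem_range] at this
  have hmemB : ∀ j (hj : j < lb.length), lb[j] < m := by
    intro j hj
    have : lb[j] ∈ BT := (Finset.mem_sort _).mp (List.getElem_mem hj)
    have := hBT this
    rwa [Finset.mem_range] at this
  -- membership in Po gives c < v
  have hPolt : ∀ i, i < s → c i < v i := by
    intro i hi
    have : i ∈ Po := (hPomem i).mpr hi
    rw [hPo, Finset.mem_filter] at this
    exact this.2
  rw [canonSize_eq, ← hlp, ← hlb]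
  constructor
  · -- lower bound
    apply le_trans (le_of_eq (Finset.card_range (min sP sB)).symm)
    apply Finset.card_le_card
    intro j hj
    rw [Finset.mem_range, lt_min_iff] at hj
    obtain ⟨hj1, hj2⟩ := hj
    have hjp : j < lp.length := lt_of_lt_of_le hj1 hsPle
    have hjb : j < lb.length := lt_of_lt_of_le hj2 hsBle
    rw [Finset.mem_filter, Finset.mem_range, lt_min_iff]
    refine ⟨⟨hjp, hjb⟩, ?_⟩
    rw [List.getD_eq_getElem _ _ hjp, List.getD_eq_getElem _ _ hjb]
    have hp : lp[j] < s := (hcharP j hjp).mpr hj1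
    have hb : lb[j] < s := (hcharB j hjb).mpr hj2
    rcases le_total lp[j] lb[j] with h | h
    · exact lt_of_le_of_lt (hc.monotone h) (hPolt _ hb)
    · exact lt_of_lt_of_le (hPolt _ hp) (hv.antitone h)
  · -- upper bound
    apply le_trans _ (le_of_eq (Finset.card_range (max sP sB)))
    apply Finset.card_le_card
    intro j hj
    rw [Finset.mem_filter, Finset.mem_range, lt_min_iff] at hj
    obtain ⟨⟨hjp, hjb⟩, hcv'⟩ := hj
    rw [List.getD_eq_getElem _ _ hjp, List.getD_eq_getElem _ _ hjb] at hcv'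
    rw [Finset.mem_range, lt_max_iff]
    by_contra hge
    push_neg at hge
    obtain ⟨hge1, hge2⟩ := hge
    have hp : s ≤ lp[j] := by
      by_contra h; push_neg at h; exact absurd ((hcharP j hjp).mp h) (not_lt.mpr hge1)
    have hb : s ≤ lb[j] := by
      by_contra h; push_neg at h; exact absurd ((hcharB j hjb).mp h) (not_lt.mpr hge2)
    set k := min lp[j] lb[j] with hk
    have hks : s ≤ k := le_min hp hb
    have hkn : k < n := lt_of_le_of_lt (min_le_left _ _) (hmemP j hjp)
    have hkm : k < m := lt_of_le_of_lt (min_le_right _ _) (hmemB j hjb)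
    have hkcv : c k < v k :=
      lt_of_le_of_lt (hc.monotone (min_le_left _ _))
        (lt_of_lt_of_le hcv' (hv.antitone (min_le_right _ _)))
    have : k ∈ Po := by
      rw [hPo, Finset.mem_filter, Finset.mem_range, lt_min_iff]
      exact ⟨⟨hkn, hkm⟩, hkcv⟩
    rw [hPomem] at this
    omega
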